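/- For every real number p with 1 ≤ p < ∞ there exist constants c, C > 0 (depending on p) such that for every natural number k ≥ 1, c · (1+k)^{−1/(2p)} ≤ ( ∫_{S²} |x₁ + i x₂|^{kp} dσ(x) )^{1/p} ≤ C · (1+k)^{−1/(2p)}. -/

import Mathlib

open MeasureTheory Metric Real Set

noncomputable def Mint (b : ℝ) : ℝ := ∫ r in Ioi (0:ℝ), r ^ b * Real.exp (-r ^ (2:ℝ))

lemma Mint_eq {b : ℝ} (hb : -1 < b) : Mint b = (1/2) * Real.Gamma ((b+1)/2) :=
  integral_rpow_mul_exp_neg_rpow two_pos hb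

lemma Mint_pos {b : ℝ} (hb : -1 < b) : 0 < Mint b := by
  rw [Mint_eq hb]
  have : 0 < (b+1)/2 := by linarith
  positivity

lemma Mint_rec {b : ℝ} (hb : -1 < b) : Mint (b+2) = ((b+1)/2) * Mint b := by
  rw [Mint_eq hb, Mint_eq (by linarith : (-1:ℝ) < b + 2)]
  have h : (b+2+1)/2 = (b+1)/2 + 1 := by ring
  have hne : (b+1)/2 ≠ 0 := ne_of_gt (by linarith)
  rw [h, Real.Gamma_add_one hne]
  ring

lemma Mint_integrableOn {b : ℝ} (hb : -1 < b) :
    IntegrableOn (fun r : ℝ => r ^ b * Real.exp (-r ^ (2:ℝ))) (Ioi 0) :=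
  integrableOn_rpow_mul_exp_neg_rpow hb two_pos

lemma sq_helper {c r : ℝ} (hr0 : 0 < r) :
    (r ^ (c/2) * Real.exp (-r ^ (2:ℝ) / 2)) ^ (2:ℝ) = r ^ c * Real.exp (-r ^ (2:ℝ)) := by
  rw [Real.mul_rpow (by positivity) (by positivity), ← Real.rpow_mul hr0.le,
    ← Real.exp_mul]
  norm_num

lemma Mint_CS {b : ℝ} (hb : -1 < b) :
    Mint (b+1) ≤ Real.sqrt (Mint b) * Real.sqrt (Mint (b+2)) := by
  set μ := (volume : Measure ℝ).restrict (Ioi 0) with hμ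
  set f : ℝ → ℝ := fun r => r ^ (b/2) * Real.exp (-r ^ (2:ℝ) / 2) with hf
  set g : ℝ → ℝ := fun r => r ^ ((b+2)/2) * Real.exp (-r ^ (2:ℝ) / 2) with hg
  have hfm : Measurable f := by fun_prop
  have hgm : Measurable g := by fun_prop
  have hconj : Real.HolderConjugate 2 2 := Real.HolderConjugate.two_two
  have hf2 : Integrable (fun r => f r ^ (2:ℝ)) μ :=
    (Mint_integrableOn hb).congr_fun (fun r hr => (sq_helper hr).symm) measurableSet_Ioi
  have hg2 : Integrable (fun r => g r ^ (2:ℝ)) μ :=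
    (Mint_integrableOn (by linarith : (-1:ℝ) < b + 2)).congr_fun
      (fun r hr => (sq_helper hr).symm) measurableSet_Ioi
  have hfL : MemLp f (ENNReal.ofReal 2) μ := by
    rw [show ENNReal.ofReal 2 = 2 by norm_num]
    rw [memLp_two_iff_integrable_sq hfm.aestronglyMeasurable]
    refine hf2.congr (Filter.Eventually.of_forall fun r => ?_)
    exact_mod_cast Real.rpow_natCast (f r) 2
  have hgL : MemLp g (ENNReal.ofReal 2) μ := by
    rw [show ENNReal.ofReal 2 = 2 by norm_num]
    rw [memLp_two_iff_integrable_sq hgm.aestronglyMeasurable]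
    refine hg2.congr (Filter.Eventually.of_forall fun r => ?_)
    exact_mod_cast Real.rpow_natCast (g r) 2
  have hfn : 0 ≤ᵐ[μ] f := by
    rw [hμ]
    filter_upwards [ae_restrict_mem measurableSet_Ioi] with r hr
    have : (0:ℝ) < r := hr
    positivity
  have hgn : 0 ≤ᵐ[μ] g := by
    rw [hμ]
    filter_upwards [ae_restrict_mem measurableSet_Ioi] with r hr
    have : (0:ℝ) < r := hr
    positivity
  have key := MeasureTheory.integral_mul_le_Lp_mul_Lq_of_nonneg hconj hfn hgn hfL hgL
  have h1 : ∫ r, f r * g r ∂μ = Mint (b+1) := by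
    refine setIntegral_congr_fun measurableSet_Ioi fun r hr => ?_
    have hr0 : (0:ℝ) < r := hr
    simp only [hf, hg]
    rw [show r ^ (b/2) * Real.exp (-r ^ (2:ℝ) / 2) * (r ^ ((b+2)/2) * Real.exp (-r ^ (2:ℝ) / 2))
        = r ^ (b/2) * r ^ ((b+2)/2) * (Real.exp (-r ^ (2:ℝ) / 2) * Real.exp (-r ^ (2:ℝ) / 2)) by ring,
      ← Real.rpow_add hr0, ← Real.exp_add]
    norm_num
    ring_nf
  have h2 : ∫ r, f r ^ (2:ℝ) ∂μ = Mint b :=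
    setIntegral_congr_fun measurableSet_Ioi fun r hr => sq_helper hr
  have h3 : ∫ r, g r ^ (2:ℝ) ∂μ = Mint (b+2) :=
    setIntegral_congr_fun measurableSet_Ioi fun r hr => sq_helper hr
  rw [h1, h2, h3] at key
  refine key.trans_eq ?_
  rw [Real.sqrt_eq_rpow, Real.sqrt_eq_rpow]

local notation "E3" => EuclideanSpace ℝ (Fin 3)

noncomputable def Fa (a : ℝ) (x : E3) : ℝ :=
  ‖(x 0 : ℂ) + Complex.I * (x 1 : ℂ)‖ ^ a

lemma Fa_smul (a : ℝ) (ha : 0 ≤ a) (c : ℝ) (hc : 0 ≤ c) (x : E3) :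
    Fa a (c • x) = c ^ a * Fa a x := by
  unfold Fa
  have h1 : ((c • x) 0 : ℝ) = c * x 0 := rfl
  have h2 : ((c • x) 1 : ℝ) = c * x 1 := rfl
  rw [h1, h2]
  have : ((c * x 0 : ℝ) : ℂ) + Complex.I * ((c * x 1 : ℝ) : ℂ)
      = (c : ℂ) * ((x 0 : ℂ) + Complex.I * (x 1 : ℂ)) := by
    push_cast; ring
  rw [this, norm_mul, Complex.norm_real, Real.norm_eq_abs, abs_of_nonneg hc,
    Real.mul_rpow hc (by positivity)]

lemma polar_identity (a : ℝ) (ha : 0 < a) :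
    ∫ x : E3, Fa a x * Real.exp (-‖x‖ ^ (2:ℝ)) =
      (∫ u : sphere (0:E3) 1, Fa a u ∂(volume : Measure E3).toSphere) * Mint (a+2) := by
  have h1 : ∫ x : E3, Fa a x * Real.exp (-‖x‖ ^ (2:ℝ))
      = ∫ x : ({0}ᶜ : Set E3), Fa a x.1 * Real.exp (-‖x.1‖ ^ (2:ℝ))
          ∂((volume : Measure E3).comap (↑)) := by
    rw [integral_subtype_comap (measurableSet_singleton _).compl
      (fun x => Fa a x * Real.exp (-‖x‖ ^ (2:ℝ))), restrict_compl_singleton]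
  rw [h1]
  have h2 := ((volume : Measure E3).measurePreserving_homeomorphUnitSphereProd).integral_comp
    (Homeomorph.measurableEmbedding _)
    (fun y : sphere (0:E3) 1 × Ioi (0:ℝ) =>
      Fa a y.1 * ((y.2 : ℝ) ^ a * Real.exp (-(y.2 : ℝ) ^ (2:ℝ))))
  rw [show (∫ x : ({0}ᶜ : Set E3), Fa a x.1 * Real.exp (-‖x.1‖ ^ (2:ℝ))
      ∂((volume : Measure E3).comap (↑)))
      = ∫ x : ({0}ᶜ : Set E3),
          (fun y : sphere (0:E3) 1 × Ioi (0:ℝ) =>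
            Fa a y.1 * ((y.2 : ℝ) ^ a * Real.exp (-(y.2 : ℝ) ^ (2:ℝ))))
          (homeomorphUnitSphereProd E3 x) ∂((volume : Measure E3).comap (↑)) from ?_, h2]
  · rw [MeasureTheory.integral_prod_mul (μ := (volume : Measure E3).toSphere)
      (fun u : sphere (0:E3) 1 => Fa a u)
      (fun r : Ioi (0:ℝ) => (r : ℝ) ^ a * Real.exp (-(r : ℝ) ^ (2:ℝ)))]
    congr 1
    -- ∫ over Ioi with volumeIoiPow 2 equals Mint (a+2)
    simp only [Measure.volumeIoiPow, ENNReal.ofReal]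
    rw [show Module.finrank ℝ E3 - 1 = 2 by simp [finrank_euclideanSpace_fin]]
    rw [integral_withDensity_eq_integral_smul
      ((measurable_subtype_coe.pow_const _).real_toNNReal)
      (fun r : Ioi (0:ℝ) => (r : ℝ) ^ a * Real.exp (-(r : ℝ) ^ (2:ℝ))),
      integral_subtype_comap measurableSet_Ioi
      (fun r : ℝ => Real.toNNReal (r ^ (2)) • (r ^ a * Real.exp (-r ^ (2:ℝ))))]
    refine setIntegral_congr_fun measurableSet_Ioi fun r hr => ?_
    have hr0 : (0:ℝ) < r := hr
    rw [NNReal.smul_def, Real.coe_toNNReal _ (by positivity)]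
    show (r:ℝ) ^ (2 : ℕ) * (r ^ a * Real.exp (-r ^ (2:ℝ))) = r ^ (a+2) * Real.exp (-r ^ (2:ℝ))
    rw [← Real.rpow_natCast r (2), ← mul_assoc, ← Real.rpow_add hr0]
    norm_num [add_comm]
  · refine integral_congr_ae (Filter.Eventually.of_forall fun x => ?_)
    have hx : (x : E3) ≠ 0 := x.2
    have hnorm : (0:ℝ) < ‖(x:E3)‖ := norm_pos_iff.mpr hx
    simp only [homeomorphUnitSphereProd_apply_fst_coe, homeomorphUnitSphereProd_apply_snd_coe]
    rw [Fa_smul a ha.le _ (by positivity),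
      Real.inv_rpow (norm_nonneg _)]
    field_simp

local notation "E2" => EuclideanSpace ℝ (Fin 2)

lemma normsq3 (x : E3) : ‖x‖ ^ (2:ℝ) = x 0^2 + x 1^2 + x 2^2 := by
  rw [show (2:ℝ) = ((2:ℕ):ℝ) by norm_num, Real.rpow_natCast, EuclideanSpace.norm_eq,
    Real.sq_sqrt (by positivity), Fin.sum_univ_three]
  simp [Real.norm_eq_abs, sq_abs]

lemma normsq2 (z : E2) : ‖z‖ ^ (2:ℝ) = z 0^2 + z 1^2 := by
  rw [show (2:ℝ) = ((2:ℕ):ℝ) by norm_num, Real.rpow_natCast, EuclideanSpace.norm_eq,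
    Real.sq_sqrt (by positivity), Fin.sum_univ_two]
  simp [Real.norm_eq_abs, sq_abs]

lemma norm2_eq_abs (z : E2) : ‖z‖ = ‖(z 0 : ℂ) + Complex.I * z 1‖ := by
  rw [show ((z 0 : ℂ) + Complex.I * z 1) = (z 0 : ℂ) + (z 1 : ℂ) * Complex.I by ring,
    Complex.norm_add_mul_I, EuclideanSpace.norm_eq, Fin.sum_univ_two]
  simp [Real.norm_eq_abs, sq_abs]

lemma gaussian_fubini (a : ℝ) (ha : 0 < a) :
    ∫ x : E3, Fa a x * Real.exp (-‖x‖ ^ (2:ℝ)) =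
      Real.sqrt π * ∫ y : E2, ‖y‖ ^ a * Real.exp (-‖y‖ ^ (2:ℝ)) := by
  -- Step 1: transfer E3 to Pi
  have s1 := ((EuclideanSpace.volume_preserving_symm_measurableEquiv_toLp (Fin 3)).symm
      (MeasurableEquiv.toLp 2 (Fin 3 → ℝ)).symm).integral_comp
    (MeasurableEquiv.measurableEmbedding _)
    (fun x : E3 => Fa a x * Real.exp (-‖x‖ ^ (2:ℝ)))
  rw [← s1]
  -- rewrite integrand on Pi (Fin 3)
  have e1 : ∀ w : Fin 3 → ℝ,
      Fa a ((MeasurableEquiv.toLp 2 (Fin 3 → ℝ)).symm.symm w)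
        * Real.exp (-‖(MeasurableEquiv.toLp 2 (Fin 3 → ℝ)).symm.symm w‖ ^ (2:ℝ))
      = ‖(w 0 : ℂ) + Complex.I * (w 1 : ℂ)‖ ^ a
          * Real.exp (-(w 0^2 + w 1^2 + w 2^2)) := by
    intro w
    have hc : ∀ i, ((MeasurableEquiv.toLp 2 (Fin 3 → ℝ)).symm.symm w) i = w i := fun i => rfl
    rw [normsq3]
    unfold Fa
    rw [hc 0, hc 1, hc 2]
  simp_rw [e1]
  -- Step 2: split off the last coordinate
  have s2 := ((MeasureTheory.volume_preserving_piFinSuccAbove (fun _ : Fin 3 => ℝ) 2).symm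
      (MeasurableEquiv.piFinSuccAbove (fun _ : Fin 3 => ℝ) 2)).integral_comp
    (MeasurableEquiv.measurableEmbedding _)
    (fun w : Fin 3 → ℝ => ‖(w 0 : ℂ) + Complex.I * (w 1 : ℂ)‖ ^ a
          * Real.exp (-(w 0^2 + w 1^2 + w 2^2)))
  rw [← s2]
  have e2 : ∀ z : ℝ × (Fin 2 → ℝ),
      (fun w : Fin 3 → ℝ => ‖(w 0 : ℂ) + Complex.I * (w 1 : ℂ)‖ ^ a
          * Real.exp (-(w 0^2 + w 1^2 + w 2^2)))
        ((MeasurableEquiv.piFinSuccAbove (fun _ : Fin 3 => ℝ) 2).symm z)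
      = (fun t : ℝ => Real.exp (-(t^2))) z.1 *
        (fun y : Fin 2 → ℝ => ‖(y 0 : ℂ) + Complex.I * (y 1 : ℂ)‖ ^ a
          * Real.exp (-(y 0^2 + y 1^2))) z.2 := by
    rintro ⟨t, y⟩
    have hsymm : ((MeasurableEquiv.piFinSuccAbove (fun _ : Fin 3 => ℝ) 2).symm (t, y))
        = Fin.insertNth (α := fun _ : Fin 3 => ℝ) 2 t y := rfl
    have h0 : (Fin.insertNth (α := fun _ : Fin 3 => ℝ) 2 t y) 0 = y 0 := by
      have h : (0 : Fin 3) = (2:Fin 3).succAbove 0 := rfl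
      rw [h, Fin.insertNth_apply_succAbove]
    have h1 : (Fin.insertNth (α := fun _ : Fin 3 => ℝ) 2 t y) 1 = y 1 := by
      have h : (1 : Fin 3) = (2:Fin 3).succAbove 1 := rfl
      rw [h, Fin.insertNth_apply_succAbove]
    have h2 : (Fin.insertNth (α := fun _ : Fin 3 => ℝ) 2 t y) 2 = t := Fin.insertNth_apply_same _ _ _
    simp only [hsymm, h0, h1, h2]
    rw [show -(y 0^2 + y 1^2 + t^2) = -(t^2) + -(y 0^2 + y 1^2) by ring, Real.exp_add]
    ring
  simp_rw [e2]
  rw [MeasureTheory.Measure.volume_eq_prod, MeasureTheory.integral_prod_mul (fun t : ℝ => Real.exp (-(t^2)))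
    (fun y : Fin 2 → ℝ => ‖(y 0 : ℂ) + Complex.I * (y 1 : ℂ)‖ ^ a
          * Real.exp (-(y 0^2 + y 1^2)))]
  have hg : ∫ t : ℝ, Real.exp (-(t^2)) = Real.sqrt π := by
    have := integral_gaussian 1
    simpa using this
  rw [hg]
  congr 1
  -- Step 3: back to E2
  have s3 := (EuclideanSpace.volume_preserving_symm_measurableEquiv_toLp (Fin 2)).integral_comp
    (MeasurableEquiv.measurableEmbedding _)
    (fun y : Fin 2 → ℝ => ‖(y 0 : ℂ) + Complex.I * (y 1 : ℂ)‖ ^ a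
          * Real.exp (-(y 0^2 + y 1^2)))
  rw [← s3]
  refine integral_congr_ae (Filter.Eventually.of_forall fun z => ?_)
  have hc : ∀ i, (MeasurableEquiv.toLp 2 (Fin 2 → ℝ)).symm z i = z i := fun i => rfl
  simp only [hc]
  rw [normsq2 z, norm2_eq_abs z]

lemma radial2 (a : ℝ) (ha : 0 < a) :
    ∫ y : E2, ‖y‖ ^ a * Real.exp (-‖y‖ ^ (2:ℝ)) =
      2 * (volume (ball (0:E2) 1)).toReal * Mint (a+1) := by
  have key := MeasureTheory.integral_fun_norm_addHaar (volume : Measure E2)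
    (fun r : ℝ => |r| ^ a * Real.exp (-|r| ^ (2:ℝ)))
  have hL : ∀ x : E2, |‖x‖| ^ a * Real.exp (-|‖x‖| ^ (2:ℝ))
      = ‖x‖ ^ a * Real.exp (-‖x‖ ^ (2:ℝ)) := by
    intro x; rw [abs_norm]
  simp_rw [hL] at key
  rw [key]
  rw [show Module.finrank ℝ (EuclideanSpace ℝ (Fin 2)) = 2 from finrank_euclideanSpace_fin]
  have hR : ∫ y in Ioi (0:ℝ), y ^ (2-1 : ℕ) • (|y| ^ a * Real.exp (-|y| ^ (2:ℝ)))
      = Mint (a+1) := by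
    refine setIntegral_congr_fun measurableSet_Ioi fun r hr => ?_
    have hr0 : (0:ℝ) < r := hr
    rw [abs_of_pos hr0, smul_eq_mul]
    norm_num
    rw [← mul_assoc, show r * r ^ a = r ^ (a+1) by rw [Real.rpow_add hr0, Real.rpow_one]; ring]
  rw [hR, nsmul_eq_mul, smul_eq_mul]
  push_cast
  simp only [Measure.real]
  ring

/-- The standard surface measure on the unit sphere `S² ⊆ ℝ³`. -/
noncomputable def sphereMeasure : Measure (sphere (0 : EuclideanSpace ℝ (Fin 3)) 1) :=
  (volume : Measure (EuclideanSpace ℝ (Fin 3))).toSphere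

/-- Two-sided bound for the `L^p(S²)` norms of the highest-weight spherical harmonics
`ψ̃_k(x) = (x₁+ix₂)^k`: for `1 ≤ p < ∞` there are `c, C > 0` such that for all `k ≥ 1`,
`c (1+k)^{−1/(2p)} ≤ (∫_{S²} |x₁+ix₂|^{kp} dσ)^{1/p} ≤ C (1+k)^{−1/(2p)}`. -/
theorem highestWeight_Lp_norm_asymptotics (p : ℝ) (hp1 : 1 ≤ p) :
    ∃ c C : ℝ, 0 < c ∧ 0 < C ∧ ∀ k : ℕ, 1 ≤ k →
      c * (1 + (k : ℝ)) ^ (-(1 / (2 * p))) ≤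
        (∫ x : sphere (0 : EuclideanSpace ℝ (Fin 3)) 1,
            ‖((x : EuclideanSpace ℝ (Fin 3)) 0 : ℂ) +
              Complex.I * ((x : EuclideanSpace ℝ (Fin 3)) 1)‖ ^ ((k : ℝ) * p)
          ∂sphereMeasure) ^ (1 / p) ∧
      (∫ x : sphere (0 : EuclideanSpace ℝ (Fin 3)) 1,
            ‖((x : EuclideanSpace ℝ (Fin 3)) 0 : ℂ) +
              Complex.I * ((x : EuclideanSpace ℝ (Fin 3)) 1)‖ ^ ((k : ℝ) * p)
          ∂sphereMeasure) ^ (1 / p) ≤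
        C * (1 + (k : ℝ)) ^ (-(1 / (2 * p))) := by
  have hp0 : 0 < p := lt_of_lt_of_le one_pos hp1
  set c₀ : ℝ := Real.sqrt π * (2 * (volume (ball (0:E2) 1)).toReal) with hc₀
  have hvol : 0 < (volume (ball (0:E2) 1)).toReal :=
    ENNReal.toReal_pos (measure_ball_pos volume _ one_pos).ne' measure_ball_lt_top.ne
  have hπ : (0:ℝ) < π := Real.pi_pos
  have hc₀pos : 0 < c₀ := by positivity
  refine ⟨c₀ ^ (1/p) * (1/p) ^ (1/(2*p)), c₀ ^ (1/p) * (4/p) ^ (1/(2*p)),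
    by positivity, by positivity, ?_⟩
  intro k hk
  have hk1 : (1:ℝ) ≤ (k:ℝ) := by exact_mod_cast hk
  set a : ℝ := (k:ℝ) * p with ha_def
  have ha1 : 1 ≤ a := by nlinarith
  have ha : 0 < a := lt_of_lt_of_le one_pos ha1
  set J : ℝ := ∫ x : sphere (0 : EuclideanSpace ℝ (Fin 3)) 1,
      ‖((x : EuclideanSpace ℝ (Fin 3)) 0 : ℂ) +
        Complex.I * ((x : EuclideanSpace ℝ (Fin 3)) 1)‖ ^ a ∂sphereMeasure with hJdef
  have hJsphere : J = ∫ u : sphere (0:E3) 1, Fa a u ∂(volume : Measure E3).toSphere := rfl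
  have hJnonneg : 0 ≤ J := by
    rw [hJsphere]
    exact integral_nonneg fun u => Real.rpow_nonneg (norm_nonneg _) a
  have hJ_eq : J * Mint (a+2) = c₀ * Mint (a+1) := by
    have h1 := polar_identity a ha
    rw [gaussian_fubini a ha, radial2 a ha] at h1
    rw [hJsphere, ← h1, hc₀]
    ring
  have hM1 : Mint (a+2) ≤ Real.sqrt ((a+2)/2) * Mint (a+1) := by
    have hcs := Mint_CS (b := a+1) (by linarith)
    have hrec : Mint (a+1+2) = ((a+2)/2) * Mint (a+1) := by
      rw [Mint_rec (by linarith : (-1:ℝ) < a+1)]; ring_nf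
    rw [show a+1+1 = a+2 by ring, hrec, Real.sqrt_mul (by linarith) (Mint (a+1)),
      ← mul_assoc, mul_comm (Real.sqrt (Mint (a+1))) (Real.sqrt ((a+2)/2)), mul_assoc,
      Real.mul_self_sqrt (Mint_pos (by linarith)).le] at hcs
    exact hcs
  have hM2 : Mint (a+1) ≤ Real.sqrt (2/(a+1)) * Mint (a+2) := by
    have hcs := Mint_CS (b := a) (by linarith)
    have hrec : Mint a = (2/(a+1)) * Mint (a+2) := by
      rw [Mint_rec (by linarith : (-1:ℝ) < a)]
      field_simp
    rw [hrec, Real.sqrt_mul (by positivity) (Mint (a+2)), mul_assoc,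
      Real.mul_self_sqrt (Mint_pos (by linarith)).le] at hcs
    exact hcs
  have hMpos2 : 0 < Mint (a+2) := Mint_pos (by linarith)
  have hMpos1 : 0 < Mint (a+1) := Mint_pos (by linarith)
  have hsqrt1 : Real.sqrt (2/(a+2)) * Real.sqrt ((a+2)/2) = 1 := by
    rw [← Real.sqrt_mul (by positivity)]
    rw [show 2/(a+2) * ((a+2)/2) = 1 by field_simp]
    exact Real.sqrt_one
  have hlow : c₀ * Real.sqrt (2/(a+2)) ≤ J := by
    rw [← mul_le_mul_iff_left₀ hMpos2, hJ_eq]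
    calc c₀ * Real.sqrt (2/(a+2)) * Mint (a+2)
        ≤ c₀ * Real.sqrt (2/(a+2)) * (Real.sqrt ((a+2)/2) * Mint (a+1)) := by
          refine mul_le_mul_of_nonneg_left hM1 (by positivity)
      _ = c₀ * (Real.sqrt (2/(a+2)) * Real.sqrt ((a+2)/2)) * Mint (a+1) := by ring
      _ = c₀ * Mint (a+1) := by rw [hsqrt1]; ring
  have hup : J ≤ c₀ * Real.sqrt (2/(a+1)) := by
    rw [← mul_le_mul_iff_left₀ hMpos2, hJ_eq]
    calc c₀ * Mint (a+1) ≤ c₀ * (Real.sqrt (2/(a+1)) * Mint (a+2)) :=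
          mul_le_mul_of_nonneg_left hM2 hc₀pos.le
      _ = c₀ * Real.sqrt (2/(a+1)) * Mint (a+2) := by ring
  set t : ℝ := 1 + (k:ℝ) with ht_def
  have ht0 : (0:ℝ) < t := by positivity
  -- comparisons of ratio arguments
  have hcomp_low : (1/p) * t⁻¹ ≤ 2/(a+2) := by
    rw [show (1/p) * t⁻¹ = 1/(p*t) by field_simp]
    rw [div_le_div_iff₀ (by positivity) (by positivity)]
    have : a = (k:ℝ) * p := ha_def
    nlinarith
  have hcomp_up : 2/(a+1) ≤ (4/p) * t⁻¹ := by
    rw [show (4/p) * t⁻¹ = 4/(p*t) by field_simp]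
    rw [div_le_div_iff₀ (by positivity) (by positivity)]
    have : a = (k:ℝ) * p := ha_def
    nlinarith
  -- final rpow manipulations
  have hrw : ∀ x : ℝ, 0 ≤ x → (c₀ * Real.sqrt x) ^ (1/p) = c₀ ^ (1/p) * x ^ (1/(2*p)) := by
    intro x hx
    rw [Real.mul_rpow hc₀pos.le (Real.sqrt_nonneg x), Real.sqrt_eq_rpow,
      ← Real.rpow_mul hx]
    congr 1
    field_simp
  have hsplit : ∀ y : ℝ, 0 ≤ y → (y * t⁻¹) ^ (1/(2*p)) = y ^ (1/(2*p)) * t ^ (-(1/(2*p))) := by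
    intro y hy
    rw [Real.mul_rpow hy (by positivity), Real.rpow_neg ht0.le, Real.inv_rpow ht0.le]
  constructor
  · -- lower bound
    have e1 : c₀ * Real.sqrt ((1/p) * t⁻¹) ≤ J :=
      le_trans (mul_le_mul_of_nonneg_left (Real.sqrt_le_sqrt hcomp_low) hc₀pos.le) hlow
    have e2 : (c₀ * Real.sqrt ((1/p) * t⁻¹)) ^ (1/p) ≤ J ^ (1/p) :=
      Real.rpow_le_rpow (by positivity) e1 (by positivity)
    calc c₀ ^ (1/p) * (1/p) ^ (1/(2*p)) * t ^ (-(1/(2*p)))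
        = (c₀ * Real.sqrt ((1/p) * t⁻¹)) ^ (1/p) := by
          rw [hrw _ (by positivity), hsplit _ (by positivity), mul_assoc]
      _ ≤ J ^ (1/p) := e2
  · -- upper bound
    have e1 : J ≤ c₀ * Real.sqrt ((4/p) * t⁻¹) :=
      le_trans hup (mul_le_mul_of_nonneg_left (Real.sqrt_le_sqrt hcomp_up) hc₀pos.le)
    have e2 : J ^ (1/p) ≤ (c₀ * Real.sqrt ((4/p) * t⁻¹)) ^ (1/p) :=
      Real.rpow_le_rpow hJnonneg e1 (by positivity)
    calc J ^ (1/p) ≤ (c₀ * Real.sqrt ((4/p) * t⁻¹)) ^ (1/p) := e2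
      _ = c₀ ^ (1/p) * (4/p) ^ (1/(2*p)) * t ^ (-(1/(2*p))) := by
          rw [hrw _ (by positivity), hsplit _ (by positivity), mul_assoc]
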